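/- (Algebraic elimination in Case B, n - p = 1: combining equations (3.25) and (3.26) yields (n-2)·H·(3nH - 2(n-1)α)² = 0.) Let n ≥ 4 be an integer and let H, α, E, Y be real numbers. Set λ₁ := -(n/2)·H and λₙ := (3/2)·n·H - (n-2)·α, and assume λ₁ ≠ λₙ, λ₁ ≠ α and λₙ ≠ α. Suppose that (2/(λ₁-λₙ))·(Y/(λ₁-λₙ) - α/(λ₁-α))·E + H·(-3nH + 2(n-1)α) = 0 and ((2n(4-n)·H + 2(n-2)(n-1)·α)/((λ₁-λₙ)·(λₙ-α)))·(Y/(λ₁-λₙ) - α/(λ₁-α))·E + H·((-7n+10)·n·H + 4(n-1)(n-2)·α) = 0. Then (n-2)·H·(3nH - 2(n-1)α)² = 0. -/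

import Mathlib

open Set
theorem caseB_elimination (n : ℕ) (hn : 4 ≤ n) (H α E Y lam1 lamn : ℝ)
    (hlam1 : lam1 = -((n : ℝ) / 2) * H)
    (hlamn : lamn = (3 / 2) * (n : ℝ) * H - ((n : ℝ) - 2) * α)
    (h1 : lam1 ≠ lamn) (h2 : lam1 ≠ α) (h3 : lamn ≠ α)
    (e1 : (2 / (lam1 - lamn)) * (Y / (lam1 - lamn) - α / (lam1 - α)) * E
        + H * (-3 * (n : ℝ) * H + 2 * ((n : ℝ) - 1) * α) = 0)
    (e2 : ((2 * (n : ℝ) * (4 - (n : ℝ)) * H + 2 * ((n : ℝ) - 2) * ((n : ℝ) - 1) * α)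
            / ((lam1 - lamn) * (lamn - α)))
          * (Y / (lam1 - lamn) - α / (lam1 - α)) * E
        + H * ((-7 * (n : ℝ) + 10) * (n : ℝ) * H + 4 * ((n : ℝ) - 1) * ((n : ℝ) - 2) * α) = 0) :
    ((n : ℝ) - 2) * H * (3 * (n : ℝ) * H - 2 * ((n : ℝ) - 1) * α) ^ 2 = 0 := by
  have hd1 : lam1 - lamn ≠ 0 := sub_ne_zero.mpr h1
  have hd2 : lam1 - α ≠ 0 := sub_ne_zero.mpr h2
  have hd3 : lamn - α ≠ 0 := sub_ne_zero.mpr h3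
  -- key: S*E value
  have hSE : (Y / (lam1 - lamn) - α / (lam1 - α)) * E
      = (lam1 - lamn) * (H * (3 * (n:ℝ) * H - 2 * ((n:ℝ) - 1) * α)) / 2 := by
    field_simp at e1 ⊢
    linear_combination e1
  rw [mul_assoc, hSE] at e2
  field_simp at e2
  subst hlam1 hlamn
  have h : (-((n:ℝ)/2) * H - ((3/2) * (n:ℝ) * H - ((n:ℝ) - 2) * α)) *
      (-3 * (((n:ℝ) - 2) * H * (3 * (n:ℝ) * H - 2 * ((n:ℝ) - 1) * α) ^ 2)) = 0 := by
    linear_combination (2 * (-((n:ℝ)/2) * H - ((3/2) * (n:ℝ) * H - ((n:ℝ) - 2) * α))) * e2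
  have h' := (mul_eq_zero.mp h).resolve_left hd1
  linarith
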